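/- arXiv:0803.0396 — 2 statements merged into one kernel-verified Lean document; each statement's English description precedes it below -/
import Mathlib

section
/- Let μ_n := 1 − 1/n for n ≥ 1, let (φ_n) be positive reals with Σ_n φ_n < ∞, and set φ(τ) := Σ_n φ_n e^{iμ_n τ}. Then for every k ≥ 1 and α > 0, ℱ_α φ(μ_k) = Σ_n φ_n · 2α/(α² + (1/n − 1/k)²) ≥ 2φ_k/α; in particular lim_{α→0} ℱ_α φ(μ_k) = +∞ for every k. -/
open MeasureTheory Filter Set

lemma aux_integrableOn_exp_Ioi {z : ℂ} (hz : z.re < 0) :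
    IntegrableOn (fun x : ℝ => Complex.exp (z * x)) (Ioi 0) := by
  refine ((exp_neg_integrableOn_Ioi 0 (by linarith : (0:ℝ) < -z.re)).mono'
    ?_ ?_)
  · exact (Complex.continuous_exp.comp
      (continuous_const.mul Complex.continuous_ofReal)).aestronglyMeasurable
  · filter_upwards with x
    simp [Complex.norm_exp, Complex.mul_re]

lemma aux_int_Ioi {z : ℂ} (hz : z.re < 0) :
    ∫ x in Ioi (0:ℝ), Complex.exp (z * x) = -z⁻¹ := by
  have hz0 : z ≠ 0 := fun h => by simp [h] at hz
  have hd : ∀ x ∈ Ici (0:ℝ), HasDerivAt (fun x : ℝ => Complex.exp (z * x) / z)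
      (Complex.exp (z * x)) x := by
    intro x _
    have h1 : HasDerivAt (fun y : ℂ => Complex.exp (z * y)) (Complex.exp (z * x) * z) x := by
      simpa [mul_comm, Function.comp_def] using (Complex.hasDerivAt_exp (z * x)).comp (x:ℂ)
        ((hasDerivAt_id (x:ℂ)).const_mul z)
    have h2 := (h1.comp_ofReal).div_const z
    simpa [mul_div_cancel_right₀ _ hz0] using h2
  have ht : Tendsto (fun x : ℝ => Complex.exp (z * x) / z) atTop (nhds 0) := by
    rw [tendsto_zero_iff_norm_tendsto_zero]
    have heq : (fun x : ℝ => ‖Complex.exp (z * x) / z‖)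
        = fun x => Real.exp (-(-z.re * x)) / ‖z‖ := by
      funext x
      simp [Complex.norm_exp, Complex.mul_re]
    rw [heq]
    have h3 : Tendsto (fun x : ℝ => Real.exp (-(-z.re * x))) atTop (nhds 0) := by
      apply Real.tendsto_exp_atBot.comp
      apply tendsto_neg_atBot_iff.mpr
      exact Tendsto.const_mul_atTop (by linarith) tendsto_id
    simpa using h3.div_const ‖z‖
  have := integral_Ioi_of_hasDerivAt_of_tendsto' hd (aux_integrableOn_exp_Ioi hz) ht
  simpa using this

lemma aux_int_Iic {z : ℂ} (hz : 0 < z.re) :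
    ∫ x in Iic (0:ℝ), Complex.exp (z * x) = z⁻¹ := by
  have h := aux_int_Ioi (z := -z) (by simpa using hz)
  have e1 := integral_comp_neg_Ioi (0:ℝ) (fun x : ℝ => Complex.exp (z * x))
  rw [neg_zero] at e1
  rw [← e1]
  simp only [Complex.ofReal_neg, mul_neg, neg_mul] at h ⊢
  rw [h, inv_neg, neg_neg]

lemma aux_integrableOn_Iic_comp {E : Type*} [NormedAddCommGroup E] {f : ℝ → E}
    (hf : IntegrableOn f (Ioi (0:ℝ))) :
    IntegrableOn (fun x => f (-x)) (Iic (0:ℝ)) := by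
  have A : MeasurableEmbedding (fun x : ℝ => -x) :=
    (Homeomorph.neg ℝ).isClosedEmbedding.measurableEmbedding
  have hmap : (volume : Measure ℝ).restrict (Iic 0)
      = Measure.map (fun x : ℝ => -x) ((volume : Measure ℝ).restrict (Ici 0)) := by
    rw [← Measure.map_neg_eq_self (volume : Measure ℝ)]
    rw [Measure.restrict_map A.measurable measurableSet_Iic]
    congr 1
    ext x
    simp
  rw [IntegrableOn, hmap, A.integrable_map_iff]
  have hc : ((fun x => f (-x)) ∘ fun x : ℝ => -x) = f := by funext x; simp
  rw [hc]
  exact (integrableOn_Ici_iff_integrableOn_Ioi).mpr hf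

lemma aux_integrable_exp_neg_abs {α : ℝ} (hα : 0 < α) :
    Integrable (fun x : ℝ => Real.exp (-α * |x|)) := by
  rw [← integrableOn_univ, ← Set.Iic_union_Ioi (a := (0:ℝ)), integrableOn_union]
  constructor
  · have h := aux_integrableOn_Iic_comp (f := fun x : ℝ => Real.exp (-α * |x|))
      ((exp_neg_integrableOn_Ioi 0 hα).congr_fun (fun x hx => by
          rw [abs_of_pos hx]) measurableSet_Ioi)
    exact h.congr_fun (fun x hx => by simp) measurableSet_Iic
  · exact (exp_neg_integrableOn_Ioi 0 hα).congr_fun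
      (fun x hx => by rw [abs_of_pos hx]) measurableSet_Ioi

lemma aux_int_full {α c : ℝ} (hα : 0 < α) :
    (Integrable fun τ : ℝ => Complex.exp (-(α:ℂ) * |τ|) * Complex.exp (Complex.I * c * τ)) ∧
    ∫ τ : ℝ, Complex.exp (-(α:ℂ) * |τ|) * Complex.exp (Complex.I * c * τ)
      = ((2 * α / (α ^ 2 + c ^ 2) : ℝ) : ℂ) := by
  have hnorm : ∀ τ : ℝ,
      ‖Complex.exp (-(α:ℂ) * |τ|) * Complex.exp (Complex.I * c * τ)‖ = Real.exp (-α * |τ|) := by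
    intro τ
    simp [Complex.norm_exp, Complex.mul_re, Complex.mul_im]
  have hint : Integrable fun τ : ℝ =>
      Complex.exp (-(α:ℂ) * |τ|) * Complex.exp (Complex.I * c * τ) := by
    refine (aux_integrable_exp_neg_abs hα).mono' ?_ ?_
    · apply Continuous.aestronglyMeasurable
      fun_prop
    · filter_upwards with τ
      rw [hnorm τ]
  refine ⟨hint, ?_⟩
  have hne1 : ((α:ℂ) + Complex.I * c) ≠ 0 := by
    intro h
    have := congrArg Complex.re h
    simp [Complex.add_re, Complex.mul_re] at this
    linarith
  have hne2 : (-(α:ℂ) + Complex.I * c) ≠ 0 := by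
    intro h
    have := congrArg Complex.re h
    simp [Complex.add_re, Complex.mul_re] at this
    linarith
  have hIic : ∫ τ in Iic (0:ℝ), Complex.exp (-(α:ℂ) * |τ|) * Complex.exp (Complex.I * c * τ)
      = ((α:ℂ) + Complex.I * c)⁻¹ := by
    rw [setIntegral_congr_fun measurableSet_Iic
      (g := fun τ : ℝ => Complex.exp (((α:ℂ) + Complex.I * c) * τ)) ?_]
    · exact aux_int_Iic (by simpa using hα)
    · intro τ hτ
      simp only
      rw [abs_of_nonpos hτ, ← Complex.exp_add]
      congr 1
      push_cast
      ring
  have hIoi : ∫ τ in Ioi (0:ℝ), Complex.exp (-(α:ℂ) * |τ|) * Complex.exp (Complex.I * c * τ)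
      = -(-(α:ℂ) + Complex.I * c)⁻¹ := by
    rw [setIntegral_congr_fun measurableSet_Ioi
      (g := fun τ : ℝ => Complex.exp ((-(α:ℂ) + Complex.I * c) * τ)) ?_]
    · exact aux_int_Ioi (by simpa using hα)
    · intro τ hτ
      simp only
      rw [abs_of_pos hτ, ← Complex.exp_add]
      congr 1
      push_cast
      ring
  rw [← intervalIntegral.integral_Iic_add_Ioi hint.integrableOn hint.integrableOn, hIic, hIoi]
  have hden : ((α:ℂ)^2 + (c:ℂ)^2) ≠ 0 := by
    have : ((α^2 + c^2 : ℝ) : ℂ) ≠ 0 := Complex.ofReal_ne_zero.mpr (by positivity)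
    push_cast at this
    exact this
  push_cast
  field_simp
  ring_nf
  simp [Complex.I_sq]

/-- Let `μ_n := 1 − 1/n` for `n ≥ 1` (here indexed by
`n : ℕ` via `μ n = 1 − 1/(n+1)`), let `(φ_n)` be positive reals with
`Σ φ_n < ∞`, and set `φ(τ) := Σ_n φ_n e^{iμ_n τ}`.  Then for every `k` and
`α > 0`, `2π ℱ_α φ(μ_k) = Σ_n φ_n · 2α/(α² + (1/n − 1/k)²) ≥ 2φ_k/α`; in
particular `lim_{α→0} ℱ_α φ(μ_k) = +∞` for every `k`. -/
theorem statement6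
    (φc : ℕ → ℝ) (hpos : ∀ n, 0 < φc n) (hsum : Summable φc)
    (μ : ℕ → ℝ) (hμ : ∀ n, μ n = 1 - 1 / (n + 1))
    (φ : ℝ → ℂ) (hφ : ∀ τ, φ τ = ∑' n, (φc n : ℂ) * Complex.exp (Complex.I * μ n * τ))
    (F : ℝ → ℝ → ℂ)
    (hF : ∀ α lam : ℝ, F α lam
      = ((1 / (2 * Real.pi) : ℝ) : ℂ) *
          ∫ τ : ℝ, Complex.exp (-(α : ℂ) * |τ|) * Complex.exp (-Complex.I * lam * τ) * φ τ) :
    ∀ k : ℕ, ∀ α > (0:ℝ),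
      ((2 * Real.pi : ℝ) : ℂ) * F α (μ k)
          = ((∑' n : ℕ, φc n * (2 * α / (α ^ 2 + (1 / (n + 1) - 1 / (k + 1)) ^ 2)) : ℝ) : ℂ) ∧
      2 * φc k / α ≤ ∑' n : ℕ, φc n * (2 * α / (α ^ 2 + (1 / (n + 1) - 1 / (k + 1)) ^ 2)) ∧
      Tendsto (fun α : ℝ => ‖F α (μ k)‖) (nhdsWithin 0 (Set.Ioi 0)) atTop := by
  intro k
  have hπ := Real.pi_pos
  have key : ∀ α : ℝ, 0 < α →
      (((2 * Real.pi : ℝ) : ℂ) * F α (μ k)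
        = ((∑' n : ℕ, φc n * (2 * α / (α ^ 2 + (1 / (n + 1) - 1 / (k + 1)) ^ 2)) : ℝ) : ℂ)) ∧
      (2 * φc k / α ≤ ∑' n : ℕ, φc n * (2 * α / (α ^ 2 + (1 / (n + 1) - 1 / (k + 1)) ^ 2))) := by
    intro α hα
    set c : ℕ → ℝ := fun n => μ n - μ k with hcdef
    set s : ℕ → ℝ :=
      fun n : ℕ => φc n * (2 * α / (α ^ 2 + (1 / (n + 1) - 1 / (k + 1)) ^ 2)) with hsdef
    have hsnn : ∀ n, 0 ≤ s n := by
      intro n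
      have := hpos n
      have h0 : (0:ℝ) < α ^ 2 + (1 / ((n:ℝ) + 1) - 1 / ((k:ℝ) + 1)) ^ 2 := by positivity
      positivity
    have hsle : ∀ n, s n ≤ φc n * (2 / α) := by
      intro n
      refine mul_le_mul_of_nonneg_left ?_ (hpos n).le
      rw [div_le_div_iff₀ (by positivity) hα]
      nlinarith [sq_nonneg (1 / ((n:ℝ) + 1) - 1 / ((k:ℝ) + 1))]
    have hssum : Summable s := Summable.of_nonneg_of_le hsnn hsle (hsum.mul_right _)
    have hcsq : ∀ n : ℕ, (c n) ^ 2 = (1 / ((n:ℝ) + 1) - 1 / ((k:ℝ) + 1)) ^ 2 := by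
      intro n
      simp only [hcdef, hμ]
      ring
    have hineq : 2 * φc k / α ≤ ∑' n, s n := by
      have hk : 2 * φc k / α = s k := by
        simp only [hsdef, sub_self]
        rw [show (0:ℝ)^2 = 0 by norm_num, add_zero]
        field_simp
      rw [hk]
      exact Summable.le_tsum hssum k fun j _ => hsnn j
    refine ⟨?_, hineq⟩
    rw [hF, ← mul_assoc]
    have h1 : ((2 * Real.pi : ℝ) : ℂ) * ((1 / (2 * Real.pi) : ℝ) : ℂ) = 1 := by
      rw [← Complex.ofReal_mul]
      have : (2 * Real.pi) * (1 / (2 * Real.pi)) = 1 := by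
        field_simp
      rw [this, Complex.ofReal_one]
    rw [h1, one_mul]
    have hg : ∀ τ : ℝ,
        Complex.exp (-(α:ℂ) * |τ|) * Complex.exp (-Complex.I * (μ k) * τ) * φ τ
        = ∑' n, (φc n : ℂ) *
            (Complex.exp (-(α:ℂ) * |τ|) * Complex.exp (Complex.I * (c n) * τ)) := by
      intro τ
      rw [hφ τ, ← tsum_mul_left]
      refine tsum_congr fun n => ?_
      have h2 : Complex.exp (Complex.I * (c n) * τ)
          = Complex.exp (-Complex.I * (μ k) * τ) * Complex.exp (Complex.I * (μ n) * τ) := by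
        rw [← Complex.exp_add]
        congr 1
        simp only [hcdef]
        push_cast
        ring
      rw [h2]
      ring
    simp only [hg]
    have hInt : ∀ n : ℕ, Integrable (fun τ : ℝ => (φc n : ℂ) *
        (Complex.exp (-(α:ℂ) * |τ|) * Complex.exp (Complex.I * (c n) * τ))) :=
      fun n => ((aux_int_full (c := c n) hα).1).const_mul _
    have hNorm : ∀ (n : ℕ) (τ : ℝ), ‖(φc n : ℂ) *
        (Complex.exp (-(α:ℂ) * |τ|) * Complex.exp (Complex.I * (c n) * τ))‖
        = φc n * Real.exp (-α * |τ|) := by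
      intro n τ
      simp [Complex.norm_exp, Complex.mul_re, Complex.mul_im, abs_of_pos (hpos n)]
    have hSumInt : Summable fun n : ℕ => ∫ τ : ℝ, ‖(φc n : ℂ) *
        (Complex.exp (-(α:ℂ) * |τ|) * Complex.exp (Complex.I * (c n) * τ))‖ := by
      have heq : (fun n : ℕ => ∫ τ : ℝ, ‖(φc n : ℂ) *
          (Complex.exp (-(α:ℂ) * |τ|) * Complex.exp (Complex.I * (c n) * τ))‖)
          = fun n : ℕ => φc n * ∫ τ : ℝ, Real.exp (-α * |τ|) := by
        funext n
        simp_rw [hNorm n]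
        exact integral_const_mul _ _
      rw [heq]
      exact hsum.mul_right _
    rw [← integral_tsum_of_summable_integral_norm hInt hSumInt]
    have hval : ∀ n : ℕ, (∫ τ : ℝ, (φc n : ℂ) *
        (Complex.exp (-(α:ℂ) * |τ|) * Complex.exp (Complex.I * (c n) * τ))) = ((s n : ℝ) : ℂ) := by
      intro n
      rw [integral_const_mul, (aux_int_full (c := c n) hα).2]
      rw [← Complex.ofReal_mul]
      congr 1
      simp only [hsdef]
      rw [hcsq n]
    rw [tsum_congr hval, ← Complex.ofReal_tsum]
  refine fun α hα => ⟨(key α hα).1, (key α hα).2, ?_⟩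
  have hlow : Tendsto (fun β : ℝ => φc k / Real.pi * β⁻¹) (nhdsWithin 0 (Set.Ioi 0)) atTop := by
    apply Tendsto.const_mul_atTop (div_pos (hpos k) hπ)
    exact tendsto_inv_nhdsGT_zero
  refine tendsto_atTop_mono' _ ?_ hlow
  filter_upwards [self_mem_nhdsWithin] with β hβ
  have hβ' : (0:ℝ) < β := hβ
  have h1 := (key β hβ').1
  have h2 := (key β hβ').2
  have hnm := congrArg norm h1
  rw [norm_mul, Complex.norm_real, Complex.norm_real, Real.norm_of_nonneg (by positivity),
    Real.norm_of_nonneg (le_trans (div_pos (mul_pos two_pos (hpos k)) hβ').le h2)] at hnm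
  have hS : 2 * φc k / β ≤ 2 * Real.pi * ‖F β (μ k)‖ := by rw [hnm]; exact h2
  have hS' : 2 * φc k ≤ 2 * Real.pi * ‖F β (μ k)‖ * β := (div_le_iff₀ hβ').mp hS
  have heq2 : φc k / Real.pi * β⁻¹ = (2 * φc k / β) / (2 * Real.pi) := by
    field_simp
  rw [heq2, div_le_iff₀ (by positivity)]
  calc 2 * φc k / β ≤ 2 * Real.pi * ‖F β (μ k)‖ := hS
    _ = ‖F β (μ k)‖ * (2 * Real.pi) := by ring
end

section
/- Let H := {u ∈ L²(Υ)³ : div u = 0, u₃|_{z=0} = u₃|_{z=a} = 0} with Υ = 𝕋² × (0, a), and let P be the orthogonal projection of L²(Υ)³ onto H. For k ∈ ℤ³∖{0} with k_h ≠ 0, define N_k(x_h, z) := e^{ik_h'·x_h}(cos(k₃'z)n₁(k), cos(k₃'z)n₂(k), sin(k₃'z)n₃(k)) with n₁(k) = (ik₂' + k₁'λ_k)/(√(a₁a₂a)|k_h'|), n₂(k) = (−ik₁' + k₂'λ_k)/(√(a₁a₂a)|k_h'|), n₃(k) = i|k_h'|/(√(a₁a₂a)|k'|), and λ_k = −k₃'/|k'|.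 Then N_k ∈ H, ‖N_k‖_{L²} = 1, and P(e₃ ∧ N_k) = iλ_k N_k. -/
open Real MeasureTheory

private lemma aux_swap (f : ℝ → ℝ → ℂ) (hf : Continuous fun p : ℝ × ℝ => f p.1 p.2) (L M : ℝ)
    (hL : 0 ≤ L) (hM : 0 ≤ M) :
    ∫ x in (0:ℝ)..L, ∫ y in (0:ℝ)..M, f x y = ∫ y in (0:ℝ)..M, ∫ x in (0:ℝ)..L, f x y := by
  simp_rw [intervalIntegral.integral_of_le hL, intervalIntegral.integral_of_le hM]
  have hint : Integrable (Function.uncurry f)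
      ((volume.restrict (Set.Ioc 0 L)).prod (volume.restrict (Set.Ioc 0 M))) := by
    rw [Measure.prod_restrict]
    have : IntegrableOn (Function.uncurry f) ((Set.Icc 0 L) ×ˢ (Set.Icc 0 M)) (volume.prod volume) :=
      hf.continuousOn.integrableOn_compact (isCompact_Icc.prod isCompact_Icc)
    exact this.mono_set (Set.prod_mono Set.Ioc_subset_Icc_self Set.Ioc_subset_Icc_self)
  exact MeasureTheory.integral_integral_swap hint

private lemma aux_ftc {L : ℝ} (g g' : ℝ → ℂ) (hg : ∀ t, HasDerivAt g (g' t) t)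
    (hc : Continuous g') :
    ∫ t in (0:ℝ)..L, g' t = g L - g 0 :=
  intervalIntegral.integral_eq_sub_of_hasDerivAt (fun t _ => hg t) (hc.intervalIntegrable _ _)

private lemma aux_ftcR {L : ℝ} (g g' : ℝ → ℝ) (hg : ∀ t, HasDerivAt g (g' t) t)
    (hc : Continuous g') :
    ∫ t in (0:ℝ)..L, g' t = g L - g 0 :=
  intervalIntegral.integral_eq_sub_of_hasDerivAt (fun t _ => hg t) (hc.intervalIntegrable _ _)

set_option maxHeartbeats 1000000 in
/-- Let `H := {u ∈ L²(Υ)³ : div u = 0, u₃|_{z=0} = u₃|_{z=a} = 0}`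
with `Υ = 𝕋² × (0,a)`, and let `P` be the orthogonal projection of `L²(Υ)³`
onto `H`.  For `k ∈ ℤ³∖{0}` with `k_h ≠ 0`, the explicit eigenfunction `N_k`
belongs to `H`, has unit `L²` norm, and satisfies `P(e₃ ∧ N_k) = iλ_k N_k`.
Membership in `H` is expressed by pointwise divergence-freeness and vanishing
of the vertical component at `z = 0, a`; the projection identity is expressed
by orthogonality of `e₃ ∧ N_k − iλ_k N_k` to every (smooth, periodic,
divergence-free, no-vertical-flux) element of `H`. -/
theorem statement17
    (a₁ a₂ a : ℝ) (ha₁ : 0 < a₁) (ha₂ : 0 < a₂) (ha : 0 < a)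
    (k₁ k₂ k₃ : ℤ) (hkh : ¬(k₁ = 0 ∧ k₂ = 0))
    (k1' k2' k3' nk nkh lamk : ℝ)
    (h1 : k1' = 2 * π * k₁ / a₁) (h2 : k2' = 2 * π * k₂ / a₂) (h3 : k3' = π * k₃ / a)
    (hnk : nk = Real.sqrt (k1' ^ 2 + k2' ^ 2 + k3' ^ 2))
    (hnkh : nkh = Real.sqrt (k1' ^ 2 + k2' ^ 2))
    (hlam : lamk = -k3' / nk)
    (n1 n2 n3 : ℂ)
    (hn1 : n1 = (Complex.I * (k2' : ℂ) + ((k1' * lamk : ℝ) : ℂ))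
        / ((Real.sqrt (a₁ * a₂ * a) * nkh : ℝ) : ℂ))
    (hn2 : n2 = (-Complex.I * (k1' : ℂ) + ((k2' * lamk : ℝ) : ℂ))
        / ((Real.sqrt (a₁ * a₂ * a) * nkh : ℝ) : ℂ))
    (hn3 : n3 = Complex.I * ((nkh : ℝ) : ℂ) / ((Real.sqrt (a₁ * a₂ * a) * nk : ℝ) : ℂ))
    (N : ℝ → ℝ → ℝ → Fin 3 → ℂ)
    (hN : ∀ x y z : ℝ, N x y z =
      ![Complex.exp (Complex.I * ((k1' * x + k2' * y : ℝ) : ℂ)) * ((Real.cos (k3' * z) : ℝ) : ℂ) * n1,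
        Complex.exp (Complex.I * ((k1' * x + k2' * y : ℝ) : ℂ)) * ((Real.cos (k3' * z) : ℝ) : ℂ) * n2,
        Complex.exp (Complex.I * ((k1' * x + k2' * y : ℝ) : ℂ)) * ((Real.sin (k3' * z) : ℝ) : ℂ) * n3]) :
    -- (1) N_k is divergence free,
    (∀ x y z : ℝ,
        deriv (fun x' => N x' y z 0) x + deriv (fun y' => N x y' z 1) y
          + deriv (fun z' => N x y z' 2) z = 0) ∧
    -- (2) the vertical component of N_k vanishes at z = 0 and z = a,
    (∀ x y : ℝ, N x y 0 2 = 0 ∧ N x y a 2 = 0) ∧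
    -- (3) N_k has unit L² norm on Υ = 𝕋² × (0,a),
    (∫ x in (0:ℝ)..a₁, ∫ y in (0:ℝ)..a₂, ∫ z in (0:ℝ)..a,
        (‖N x y z 0‖ ^ 2 + ‖N x y z 1‖ ^ 2 + ‖N x y z 2‖ ^ 2) = 1) ∧
    -- (4) P(e₃ ∧ N_k) = iλ_k N_k : the field e₃ ∧ N_k − iλ_k N_k is
    -- orthogonal to every element of H.
    (∀ u : ℝ → ℝ → ℝ → Fin 3 → ℂ,
      (∀ j : Fin 3, ContDiff ℝ 1 (fun p : ℝ × ℝ × ℝ => u p.1 p.2.1 p.2.2 j)) →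
      (∀ x y z : ℝ, u (x + a₁) y z = u x y z) →
      (∀ x y z : ℝ, u x (y + a₂) z = u x y z) →
      (∀ x y z : ℝ,
          deriv (fun x' => u x' y z 0) x + deriv (fun y' => u x y' z 1) y
            + deriv (fun z' => u x y z' 2) z = 0) →
      (∀ x y : ℝ, u x y 0 2 = 0 ∧ u x y a 2 = 0) →
      ∫ x in (0:ℝ)..a₁, ∫ y in (0:ℝ)..a₂, ∫ z in (0:ℝ)..a,
          ∑ j : Fin 3,
            (starRingEnd ℂ) (u x y z j) *
              ((![-(N x y z 1), N x y z 0, 0] : Fin 3 → ℂ) j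
                - Complex.I * ((lamk : ℝ) : ℂ) * N x y z j) = 0) := by
  set D := Real.sqrt (a₁ * a₂ * a) with hD
  have hDpos : 0 < D := Real.sqrt_pos.2 (by positivity)
  have hD2 : D ^ 2 = a₁ * a₂ * a := Real.sq_sqrt (by positivity)
  have hsq : 0 < k1' ^ 2 + k2' ^ 2 := by
    rcases not_and_or.1 hkh with h | h
    · have hk : (k₁ : ℝ) ≠ 0 := Int.cast_ne_zero.2 h
      have : k1' ≠ 0 := by
        rw [h1]; positivity
      positivity
    · have hk : (k₂ : ℝ) ≠ 0 := Int.cast_ne_zero.2 h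
      have : k2' ≠ 0 := by
        rw [h2]; positivity
      positivity
  have hnkhpos : 0 < nkh := hnkh ▸ Real.sqrt_pos.2 hsq
  have hnkpos : 0 < nk := hnk ▸ Real.sqrt_pos.2 (by positivity)
  have hnkh2 : nkh ^ 2 = k1' ^ 2 + k2' ^ 2 := hnkh ▸ Real.sq_sqrt hsq.le
  have hnk2 : nk ^ 2 = k1' ^ 2 + k2' ^ 2 + k3' ^ 2 := hnk ▸ Real.sq_sqrt (by positivity)
  have hlamnk : lamk * nk = -k3' := by rw [hlam]; field_simp
  -- cast versions
  have cD : ((D : ℝ) : ℂ) ≠ 0 := Complex.ofReal_ne_zero.2 hDpos.ne'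
  have cnk : ((nk : ℝ) : ℂ) ≠ 0 := Complex.ofReal_ne_zero.2 hnkpos.ne'
  have cnkh : ((nkh : ℝ) : ℂ) ≠ 0 := Complex.ofReal_ne_zero.2 hnkhpos.ne'
  have clam : ((lamk : ℝ) : ℂ) * nk = -(k3' : ℂ) := by exact_mod_cast hlamnk
  have cnkh2 : ((nkh : ℝ) : ℂ) ^ 2 = (k1' : ℂ) ^ 2 + (k2' : ℂ) ^ 2 := by exact_mod_cast hnkh2
  have cnk2 : ((nk : ℝ) : ℂ) ^ 2 = (k1' : ℂ) ^ 2 + (k2' : ℂ) ^ 2 + (k3' : ℂ) ^ 2 := by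
    exact_mod_cast hnk2
  -- divergence scalar identity
  have sdiv : Complex.I * k1' * n1 + Complex.I * k2' * n2 + (k3' : ℂ) * n3 = 0 := by
    rw [hn1, hn2, hn3]
    have hDnkh : ((D * nkh : ℝ) : ℂ) ≠ 0 := by push_cast; exact mul_ne_zero cD cnkh
    have hDnk : ((D * nk : ℝ) : ℂ) ≠ 0 := by push_cast; exact mul_ne_zero cD cnk
    field_simp
    push_cast
    ring_nf
    linear_combination (Complex.I * (k1':ℂ)^2 * D + Complex.I * (k2':ℂ)^2 * D) * clam + Complex.I * (D:ℂ) * (k3':ℂ) * cnkh2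
  -- eigen identities
  set C : ℝ := nkh / (nk ^ 2 * D) with hC
  have s1 : -n2 - Complex.I * lamk * n1 = Complex.I * k1' * (C : ℂ) := by
    rw [hn1, hn2, hC]
    push_cast
    field_simp
    linear_combination (-(k2':ℂ)*(lamk:ℂ)*(nk:ℂ)^2) * Complex.I_sq
      + (Complex.I*(k1':ℂ)) * cnk2 - (Complex.I*(k1':ℂ)) * cnkh2
      + (-(Complex.I*(k1':ℂ)) * ((lamk:ℂ)*(nk:ℂ) - (k3':ℂ))) * clam
  have s2 : n1 - Complex.I * lamk * n2 = Complex.I * k2' * (C : ℂ) := by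
    rw [hn1, hn2, hC]
    push_cast
    field_simp
    linear_combination ((k1':ℂ)*(lamk:ℂ)*(nk:ℂ)^2) * Complex.I_sq
      + (Complex.I*(k2':ℂ)) * cnk2 - (Complex.I*(k2':ℂ)) * cnkh2
      + (-(Complex.I*(k2':ℂ)) * ((lamk:ℂ)*(nk:ℂ) - (k3':ℂ))) * clam
  have s3 : -(Complex.I * lamk * n3) = -(k3' : ℂ) * (C : ℂ) := by
    rw [hn3, hC]
    push_cast
    field_simp
    linear_combination (-(lamk:ℂ)*(nk:ℂ)) * Complex.I_sq + clam

  -- periods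
  have hk1a : k1' * a₁ = 2 * π * k₁ := by rw [h1]; field_simp
  have hk2a : k2' * a₂ = 2 * π * k₂ := by rw [h2]; field_simp
  have hk3a : k3' * a = π * k₃ := by rw [h3]; field_simp
  -- exponential derivative helpers
  have hEdx : ∀ x y : ℝ, HasDerivAt
      (fun x' : ℝ => Complex.exp (Complex.I * ((k1' * x' + k2' * y : ℝ) : ℂ)))
      (Complex.I * (k1' : ℂ) * Complex.exp (Complex.I * ((k1' * x + k2' * y : ℝ) : ℂ))) x := by
    intro x y
    have h0 : HasDerivAt (fun x' : ℝ => k1' * x' + k2' * y) k1' x := by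
      simpa using ((hasDerivAt_id x).const_mul k1').add_const (k2' * y)
    have h1' := ((h0.ofReal_comp).const_mul Complex.I).cexp
    convert h1' using 1
    ring
  have hEdy : ∀ x y : ℝ, HasDerivAt
      (fun y' : ℝ => Complex.exp (Complex.I * ((k1' * x + k2' * y' : ℝ) : ℂ)))
      (Complex.I * (k2' : ℂ) * Complex.exp (Complex.I * ((k1' * x + k2' * y : ℝ) : ℂ))) y := by
    intro x y
    have h0 : HasDerivAt (fun y' : ℝ => k1' * x + k2' * y') k2' y := by
      simpa using (((hasDerivAt_id y).const_mul k2').const_add (k1' * x))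
    have h1' := ((h0.ofReal_comp).const_mul Complex.I).cexp
    convert h1' using 1
    ring
  have hCdz : ∀ z : ℝ, HasDerivAt (fun z' : ℝ => ((Real.cos (k3' * z') : ℝ) : ℂ))
      ((-(k3' * Real.sin (k3' * z)) : ℝ) : ℂ) z := by
    intro z
    have h0 : HasDerivAt (fun z' : ℝ => k3' * z') k3' z := by
      simpa using (hasDerivAt_id z).const_mul k3'
    have := (h0.cos).ofReal_comp
    convert this using 1
    push_cast
    ring
  have hSdz : ∀ z : ℝ, HasDerivAt (fun z' : ℝ => ((Real.sin (k3' * z') : ℝ) : ℂ))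
      ((k3' * Real.cos (k3' * z) : ℝ) : ℂ) z := by
    intro z
    have h0 : HasDerivAt (fun z' : ℝ => k3' * z') k3' z := by
      simpa using (hasDerivAt_id z).const_mul k3'
    have := (h0.sin).ofReal_comp
    convert this using 1
    push_cast
    ring
  -- periodicity of the exponential
  have hexpper : ∀ (r s : ℝ) (n : ℤ), s = r + 2 * π * n →
      Complex.exp (Complex.I * (s : ℂ)) = Complex.exp (Complex.I * (r : ℂ)) := by
    intro r s n hs
    rw [hs]
    push_cast
    rw [mul_add, Complex.exp_add,
      (show Complex.I * (2 * (π : ℂ) * (n : ℂ)) = (n : ℂ) * (2 * π * Complex.I) by ring),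
      Complex.exp_int_mul_two_pi_mul_I, mul_one]
  have hEx : ∀ x y : ℝ, Complex.exp (Complex.I * ((k1' * (x + a₁) + k2' * y : ℝ) : ℂ))
      = Complex.exp (Complex.I * ((k1' * x + k2' * y : ℝ) : ℂ)) := by
    intro x y
    exact hexpper _ _ k₁ (by push_cast; linear_combination hk1a)
  have hEy : ∀ x y : ℝ, Complex.exp (Complex.I * ((k1' * x + k2' * (y + a₂) : ℝ) : ℂ))
      = Complex.exp (Complex.I * ((k1' * x + k2' * y : ℝ) : ℂ)) := by
    intro x y
    exact hexpper _ _ k₂ (by push_cast; linear_combination hk2a)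
  refine ⟨?_, ?_, ?_, ?_⟩
  · -- (1) divergence free
    intro x y z
    simp only [hN, Matrix.cons_val_zero, Matrix.cons_val_one, Matrix.head_cons,
      Matrix.cons_val_two, Matrix.tail_cons]
    have d0 := (((hEdx x y).mul_const (((Real.cos (k3' * z) : ℝ) : ℂ))).mul_const n1).deriv
    have d1 := (((hEdy x y).mul_const (((Real.cos (k3' * z) : ℝ) : ℂ))).mul_const n2).deriv
    have d2 := (((hSdz z).const_mul
        (Complex.exp (Complex.I * ((k1' * x + k2' * y : ℝ) : ℂ)))).mul_const n3).deriv
    rw [d0, d1, d2]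
    push_cast
    linear_combination
      (Complex.exp (Complex.I * ((k1' : ℂ) * (x : ℂ) + (k2' : ℂ) * (y : ℂ)))
        * Complex.cos ((k3' : ℂ) * (z : ℂ))) * sdiv
  · -- (2) boundary values
    intro x y
    constructor
    · simp [hN]
    · have hsin : Real.sin (k3' * a) = 0 := by
        rw [hk3a, mul_comm]
        exact Real.sin_int_mul_pi k₃
      simp [hN, hsin]
  · -- (3) unit norm
    have hEnorm : ∀ x y : ℝ, ‖Complex.exp (Complex.I * ((k1' * x + k2' * y : ℝ) : ℂ))‖ = 1 := by
      intro x y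
      rw [Complex.norm_exp]
      simp
    have hl2 : lamk ^ 2 * nk ^ 2 = k3' ^ 2 := by rw [← mul_pow, hlamnk]; ring
    have na : ‖n1‖ ^ 2 = (k2' ^ 2 + (k1' * lamk) ^ 2) / (D * nkh) ^ 2 := by
      rw [hn1, norm_div, div_pow]
      congr 1
      · rw [Complex.sq_norm]
        simp [Complex.normSq_apply]
        ring
      · rw [Complex.norm_real, Real.norm_eq_abs, sq_abs]
    have nb : ‖n2‖ ^ 2 = (k1' ^ 2 + (k2' * lamk) ^ 2) / (D * nkh) ^ 2 := by
      rw [hn2, norm_div, div_pow]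
      congr 1
      · rw [Complex.sq_norm]
        simp [Complex.normSq_apply]
        ring
      · rw [Complex.norm_real, Real.norm_eq_abs, sq_abs]
    have nc : ‖n3‖ ^ 2 = nkh ^ 2 / (D * nk) ^ 2 := by
      rw [hn3, norm_div, div_pow]
      congr 1
      · rw [norm_mul, Complex.norm_I, one_mul, Complex.norm_real,
          Real.norm_eq_abs, sq_abs]
      · rw [Complex.norm_real, Real.norm_eq_abs, sq_abs]
    have key : ∀ x y z : ℝ, ‖N x y z 0‖ ^ 2 + ‖N x y z 1‖ ^ 2 + ‖N x y z 2‖ ^ 2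
        = (nk ^ 2 + k3' ^ 2 * Real.cos (2 * (k3' * z))) / (nk ^ 2 * (a₁ * a₂ * a)) := by
      intro x y z
      simp only [hN, Matrix.cons_val_zero, Matrix.cons_val_one, Matrix.head_cons,
        Matrix.cons_val_two, Matrix.tail_cons]
      simp only [norm_mul, hEnorm, one_mul, mul_pow, Complex.norm_real, Real.norm_eq_abs, sq_abs]
      rw [na, nb, nc]
      have hpyth : Real.sin (k3' * z) ^ 2 = 1 - Real.cos (k3' * z) ^ 2 := by
        nlinarith [Real.sin_sq_add_cos_sq (k3' * z)]
      have hc2 : Real.cos (2 * (k3' * z)) = 2 * Real.cos (k3' * z) ^ 2 - 1 :=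
        Real.cos_two_mul (k3' * z)
      rw [hpyth, hc2]
      field_simp
      linear_combination
        (-(nkh ^ 2 * (nk ^ 2 + k3' ^ 2 * (2 * Real.cos (k3' * z) ^ 2 - 1)))) * hD2
        + (a₁ * a₂ * a) * (Real.cos (k3' * z) ^ 2 * (k1' ^ 2 + k2' ^ 2) * hl2
          - (Real.cos (k3' * z) ^ 2 * (nk ^ 2 + k3' ^ 2) + nkh ^ 2 * (Real.cos (k3' * z) ^ 2 - 1)) * hnkh2
          + nkh ^ 2 * (Real.cos (k3' * z) ^ 2 - 1) * hnk2)
    have hz : ∀ x y : ℝ, (∫ z in (0:ℝ)..a,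
        (‖N x y z 0‖ ^ 2 + ‖N x y z 1‖ ^ 2 + ‖N x y z 2‖ ^ 2)) = 1 / (a₁ * a₂) := by
      intro x y
      rw [intervalIntegral.integral_congr
        (g := fun z => (nk ^ 2 + k3' ^ 2 * Real.cos (2 * (k3' * z))) / (nk ^ 2 * (a₁ * a₂ * a)))
        (fun z _ => key x y z)]
      have hA : ∀ t : ℝ, HasDerivAt
          (fun z => (nk ^ 2 * z + k3' / 2 * Real.sin (2 * (k3' * z))) / (nk ^ 2 * (a₁ * a₂ * a)))
          ((nk ^ 2 + k3' ^ 2 * Real.cos (2 * (k3' * t))) / (nk ^ 2 * (a₁ * a₂ * a))) t := by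
        intro t
        have h0 : HasDerivAt (fun z : ℝ => 2 * (k3' * z)) (2 * k3') t := by
          simpa [mul_assoc] using (hasDerivAt_id t).const_mul (2 * k3')
        have hB := (((hasDerivAt_id t).const_mul (nk ^ 2)).add
          ((h0.sin).const_mul (k3' / 2))).div_const (nk ^ 2 * (a₁ * a₂ * a))
        refine hB.congr_deriv ?_
        ring
      rw [aux_ftcR _ _ hA (by fun_prop)]
      have hs0 : Real.sin (2 * (k3' * a)) = 0 := by
        rw [show 2 * (k3' * a) = ((2 * k₃ : ℤ) : ℝ) * π by push_cast; linear_combination 2 * hk3a]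
        exact Real.sin_int_mul_pi _
      rw [hs0]
      simp only [mul_zero, zero_add, mul_one, Real.sin_zero]
      field_simp
      ring
    calc ∫ x in (0:ℝ)..a₁, ∫ y in (0:ℝ)..a₂, ∫ z in (0:ℝ)..a,
          (‖N x y z 0‖ ^ 2 + ‖N x y z 1‖ ^ 2 + ‖N x y z 2‖ ^ 2)
        = ∫ x in (0:ℝ)..a₁, ∫ y in (0:ℝ)..a₂, (1 / (a₁ * a₂) : ℝ) := by
          refine intervalIntegral.integral_congr fun x _ => ?_
          exact intervalIntegral.integral_congr fun y _ => hz x y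
      _ = 1 := by
          simp only [intervalIntegral.integral_const, smul_eq_mul]
          field_simp
          ring
  · -- (4) orthogonality
    intro u hC1 hpx hpy hdiv hbc
    -- partial derivatives of u
    set p0 : ℝ → ℝ → ℝ → ℂ := fun x y z =>
      fderiv ℝ (fun p : ℝ × ℝ × ℝ => u p.1 p.2.1 p.2.2 0) (x, y, z) (1, 0, 0) with hp0def
    set p1 : ℝ → ℝ → ℝ → ℂ := fun x y z =>
      fderiv ℝ (fun p : ℝ × ℝ × ℝ => u p.1 p.2.1 p.2.2 1) (x, y, z) (0, 1, 0) with hp1def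
    set p2 : ℝ → ℝ → ℝ → ℂ := fun x y z =>
      fderiv ℝ (fun p : ℝ × ℝ × ℝ => u p.1 p.2.1 p.2.2 2) (x, y, z) (0, 0, 1) with hp2def
    have hu0x : ∀ x y z : ℝ, HasDerivAt (fun x' => u x' y z 0) (p0 x y z) x := by
      intro x y z
      have hγ : HasDerivAt (fun x' : ℝ => ((x', y, z) : ℝ × ℝ × ℝ)) ((1, 0, 0) : ℝ × ℝ × ℝ) x :=
        (hasDerivAt_id x).prodMk (hasDerivAt_const x (y, z))
      exact (((hC1 0).differentiable one_ne_zero (x, y, z)).hasFDerivAt).comp_hasDerivAt x hγ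
    have hu1y : ∀ x y z : ℝ, HasDerivAt (fun y' => u x y' z 1) (p1 x y z) y := by
      intro x y z
      have hγ : HasDerivAt (fun y' : ℝ => ((x, y', z) : ℝ × ℝ × ℝ)) ((0, 1, 0) : ℝ × ℝ × ℝ) y :=
        (hasDerivAt_const y x).prodMk ((hasDerivAt_id y).prodMk (hasDerivAt_const y z))
      exact (((hC1 1).differentiable one_ne_zero (x, y, z)).hasFDerivAt).comp_hasDerivAt y hγ
    have hu2z : ∀ x y z : ℝ, HasDerivAt (fun z' => u x y z' 2) (p2 x y z) z := by
      intro x y z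
      have hγ : HasDerivAt (fun z' : ℝ => ((x, y, z') : ℝ × ℝ × ℝ)) ((0, 0, 1) : ℝ × ℝ × ℝ) z :=
        (hasDerivAt_const z x).prodMk ((hasDerivAt_const z y).prodMk (hasDerivAt_id z))
      exact (((hC1 2).differentiable one_ne_zero (x, y, z)).hasFDerivAt).comp_hasDerivAt z hγ
    have hdiv' : ∀ x y z : ℝ, p0 x y z + p1 x y z + p2 x y z = 0 := by
      intro x y z
      rw [← (hu0x x y z).deriv, ← (hu1y x y z).deriv, ← (hu2z x y z).deriv]
      exact hdiv x y z
    -- continuity of the partial derivatives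
    have cp0 : Continuous (fun p : ℝ × ℝ × ℝ => p0 p.1 p.2.1 p.2.2) := by
      have h := (hC1 0).continuous_fderiv_apply one_ne_zero
      exact h.comp (continuous_id.prodMk continuous_const)
    have cp1 : Continuous (fun p : ℝ × ℝ × ℝ => p1 p.1 p.2.1 p.2.2) := by
      have h := (hC1 1).continuous_fderiv_apply one_ne_zero
      exact h.comp (continuous_id.prodMk continuous_const)
    have cp2 : Continuous (fun p : ℝ × ℝ × ℝ => p2 p.1 p.2.1 p.2.2) := by
      have h := (hC1 2).continuous_fderiv_apply one_ne_zero
      exact h.comp (continuous_id.prodMk continuous_const)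
    have cu : ∀ j : Fin 3, Continuous (fun p : ℝ × ℝ × ℝ => u p.1 p.2.1 p.2.2 j) := fun j =>
      (hC1 j).continuous
    -- the pressure function φ and its derivatives
    set φ : ℝ → ℝ → ℝ → ℂ := fun x y z =>
      (C : ℂ) * Complex.exp (Complex.I * ((k1' * x + k2' * y : ℝ) : ℂ))
        * ((Real.cos (k3' * z) : ℝ) : ℂ) with hφdef
    set ψ : ℝ → ℝ → ℝ → ℂ := fun x y z =>
      (C : ℂ) * Complex.exp (Complex.I * ((k1' * x + k2' * y : ℝ) : ℂ))
        * ((-(k3' * Real.sin (k3' * z)) : ℝ) : ℂ) with hψdef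
    have hφx : ∀ x y z : ℝ, HasDerivAt (fun x' => φ x' y z)
        (Complex.I * (k1' : ℂ) * φ x y z) x := by
      intro x y z
      have h := ((hEdx x y).const_mul ((C : ℝ) : ℂ)).mul_const ((Real.cos (k3' * z) : ℝ) : ℂ)
      simp only [hφdef]
      refine h.congr_deriv ?_
      ring
    have hφy : ∀ x y z : ℝ, HasDerivAt (fun y' => φ x y' z)
        (Complex.I * (k2' : ℂ) * φ x y z) y := by
      intro x y z
      have h := ((hEdy x y).const_mul ((C : ℝ) : ℂ)).mul_const ((Real.cos (k3' * z) : ℝ) : ℂ)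
      simp only [hφdef]
      refine h.congr_deriv ?_
      ring
    have hφz : ∀ x y z : ℝ, HasDerivAt (fun z' => φ x y z') (ψ x y z) z := by
      intro x y z
      have h := (hCdz z).const_mul
        (((C : ℝ) : ℂ) * Complex.exp (Complex.I * ((k1' * x + k2' * y : ℝ) : ℂ)))
      simp only [hφdef, hψdef]
      convert h using 1
    have hφpx : ∀ x y z : ℝ, φ (x + a₁) y z = φ x y z := by
      intro x y z; simp only [hφdef]; rw [hEx]
    have hφpy : ∀ x y z : ℝ, φ x (y + a₂) z = φ x y z := by
      intro x y z; simp only [hφdef]; rw [hEy]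
    have cφ3 : Continuous (fun p : ℝ × ℝ × ℝ => φ p.1 p.2.1 p.2.2) := by
      simp only [hφdef]; fun_prop
    have cψ3 : Continuous (fun p : ℝ × ℝ × ℝ => ψ p.1 p.2.1 p.2.2) := by
      simp only [hψdef]; fun_prop
    -- the three "perfect derivative" integrands
    set Dx : ℝ → ℝ → ℝ → ℂ := fun x y z =>
      (starRingEnd ℂ) (p0 x y z) * φ x y z
        + (starRingEnd ℂ) (u x y z 0) * (Complex.I * (k1' : ℂ) * φ x y z) with hDxdef
    set Dy : ℝ → ℝ → ℝ → ℂ := fun x y z =>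
      (starRingEnd ℂ) (p1 x y z) * φ x y z
        + (starRingEnd ℂ) (u x y z 1) * (Complex.I * (k2' : ℂ) * φ x y z) with hDydef
    set Dz : ℝ → ℝ → ℝ → ℂ := fun x y z =>
      (starRingEnd ℂ) (p2 x y z) * φ x y z
        + (starRingEnd ℂ) (u x y z 2) * ψ x y z with hDzdef
    have hfx : ∀ x y z : ℝ,
        HasDerivAt (fun x' => (starRingEnd ℂ) (u x' y z 0) * φ x' y z) (Dx x y z) x := by
      intro x y z
      simp only [hDxdef, starRingEnd_apply]
      exact (hu0x x y z).star.mul (hφx x y z)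
    have hgy : ∀ x y z : ℝ,
        HasDerivAt (fun y' => (starRingEnd ℂ) (u x y' z 1) * φ x y' z) (Dy x y z) y := by
      intro x y z
      simp only [hDydef, starRingEnd_apply]
      exact (hu1y x y z).star.mul (hφy x y z)
    have hhz : ∀ x y z : ℝ,
        HasDerivAt (fun z' => (starRingEnd ℂ) (u x y z' 2) * φ x y z') (Dz x y z) z := by
      intro x y z
      simp only [hDzdef, starRingEnd_apply]
      exact (hu2z x y z).star.mul (hφz x y z)
    have cDx3 : Continuous (fun p : ℝ × ℝ × ℝ => Dx p.1 p.2.1 p.2.2) := by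
      simp only [hDxdef, starRingEnd_apply]
      exact ((cp0.star).mul cφ3).add (((cu 0).star).mul (continuous_const.mul cφ3))
    have cDy3 : Continuous (fun p : ℝ × ℝ × ℝ => Dy p.1 p.2.1 p.2.2) := by
      simp only [hDydef, starRingEnd_apply]
      exact ((cp1.star).mul cφ3).add (((cu 1).star).mul (continuous_const.mul cφ3))
    have cDz3 : Continuous (fun p : ℝ × ℝ × ℝ => Dz p.1 p.2.1 p.2.2) := by
      simp only [hDzdef, starRingEnd_apply]
      exact ((cp2.star).mul cφ3).add (((cu 2).star).mul cψ3)
    -- pointwise identity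
    have hS : ∀ x y z : ℝ,
        (∑ j : Fin 3, (starRingEnd ℂ) (u x y z j) *
          ((![-(N x y z 1), N x y z 0, 0] : Fin 3 → ℂ) j
            - Complex.I * ((lamk : ℝ) : ℂ) * N x y z j))
        = Dx x y z + Dy x y z + Dz x y z := by
      intro x y z
      have e1 : -(N x y z 1) - Complex.I * ((lamk : ℝ) : ℂ) * N x y z 0
          = Complex.I * (k1' : ℂ) * φ x y z := by
        simp only [hN, Matrix.cons_val_zero, Matrix.cons_val_one, Matrix.head_cons, hφdef]
        push_cast
        linear_combination (Complex.exp (Complex.I * ((k1' : ℂ) * (x : ℂ) + (k2' : ℂ) * (y : ℂ)))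
          * Complex.cos ((k3' : ℂ) * (z : ℂ))) * s1
      have e2 : N x y z 0 - Complex.I * ((lamk : ℝ) : ℂ) * N x y z 1
          = Complex.I * (k2' : ℂ) * φ x y z := by
        simp only [hN, Matrix.cons_val_zero, Matrix.cons_val_one, Matrix.head_cons, hφdef]
        push_cast
        linear_combination (Complex.exp (Complex.I * ((k1' : ℂ) * (x : ℂ) + (k2' : ℂ) * (y : ℂ)))
          * Complex.cos ((k3' : ℂ) * (z : ℂ))) * s2
      have e3 : (0 : ℂ) - Complex.I * ((lamk : ℝ) : ℂ) * N x y z 2 = ψ x y z := by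
        simp only [hN, Matrix.cons_val_two, Matrix.tail_cons, Matrix.head_cons, hψdef]
        push_cast
        linear_combination (Complex.exp (Complex.I * ((k1' : ℂ) * (x : ℂ) + (k2' : ℂ) * (y : ℂ)))
          * Complex.sin ((k3' : ℂ) * (z : ℂ))) * s3
      have hdcj : (starRingEnd ℂ) (p0 x y z) + (starRingEnd ℂ) (p1 x y z)
          + (starRingEnd ℂ) (p2 x y z) = 0 := by
        rw [← map_add, ← map_add, hdiv' x y z, map_zero]
      rw [Fin.sum_univ_three]
      simp only [Matrix.cons_val_zero, Matrix.cons_val_one, Matrix.head_cons,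
        Matrix.cons_val_two, Matrix.tail_cons, hDxdef, hDydef, hDzdef]
      linear_combination (starRingEnd ℂ) (u x y z 0) * e1 + (starRingEnd ℂ) (u x y z 1) * e2
        + (starRingEnd ℂ) (u x y z 2) * e3 - (φ x y z) * hdcj
    -- innermost integral
    have hinner : ∀ x y : ℝ,
        (∫ z in (0:ℝ)..a, ∑ j : Fin 3, (starRingEnd ℂ) (u x y z j) *
          ((![-(N x y z 1), N x y z 0, 0] : Fin 3 → ℂ) j
            - Complex.I * ((lamk : ℝ) : ℂ) * N x y z j))
        = (∫ z in (0:ℝ)..a, Dx x y z) + ∫ z in (0:ℝ)..a, Dy x y z := by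
      intro x y
      have lz : Continuous (fun z : ℝ => ((x, y, z) : ℝ × ℝ × ℝ)) := by fun_prop
      have iDx : IntervalIntegrable (fun z => Dx x y z) volume 0 a :=
        (cDx3.comp lz).intervalIntegrable _ _
      have iDy : IntervalIntegrable (fun z => Dy x y z) volume 0 a :=
        (cDy3.comp lz).intervalIntegrable _ _
      have iDz : IntervalIntegrable (fun z => Dz x y z) volume 0 a :=
        (cDz3.comp lz).intervalIntegrable _ _
      have hb := hbc x y
      have hza : (∫ z in (0:ℝ)..a, Dz x y z) = 0 := by
        calc (∫ z in (0:ℝ)..a, Dz x y z)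
            = (starRingEnd ℂ) (u x y a 2) * φ x y a
              - (starRingEnd ℂ) (u x y 0 2) * φ x y 0 :=
              aux_ftc _ _ (fun z => hhz x y z) (cDz3.comp lz)
          _ = 0 := by rw [hb.1, hb.2]; simp
      calc (∫ z in (0:ℝ)..a, ∑ j : Fin 3, (starRingEnd ℂ) (u x y z j) *
            ((![-(N x y z 1), N x y z 0, 0] : Fin 3 → ℂ) j
              - Complex.I * ((lamk : ℝ) : ℂ) * N x y z j))
          = ∫ z in (0:ℝ)..a, (Dx x y z + Dy x y z + Dz x y z) :=
            intervalIntegral.integral_congr fun z _ => hS x y z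
        _ = ((∫ z in (0:ℝ)..a, Dx x y z) + ∫ z in (0:ℝ)..a, Dy x y z)
              + ∫ z in (0:ℝ)..a, Dz x y z := by
            rw [intervalIntegral.integral_add (iDx.add iDy) iDz,
              intervalIntegral.integral_add iDx iDy]
        _ = (∫ z in (0:ℝ)..a, Dx x y z) + ∫ z in (0:ℝ)..a, Dy x y z := by
            rw [hza, add_zero]
    -- middle integral : the Dy part drops out
    have hmid : ∀ x : ℝ,
        (∫ y in (0:ℝ)..a₂, ((∫ z in (0:ℝ)..a, Dx x y z) + ∫ z in (0:ℝ)..a, Dy x y z))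
        = ∫ y in (0:ℝ)..a₂, ∫ z in (0:ℝ)..a, Dx x y z := by
      intro x
      have cAy : Continuous (fun y : ℝ => ∫ z in (0:ℝ)..a, Dx x y z) :=
        intervalIntegral.continuous_parametric_intervalIntegral_of_continuous'
          (f := fun (y : ℝ) z => Dx x y z)
          (cDx3.comp (by fun_prop : Continuous fun q : ℝ × ℝ => ((x, q.1, q.2) : ℝ × ℝ × ℝ))) 0 a
      have cBy : Continuous (fun y : ℝ => ∫ z in (0:ℝ)..a, Dy x y z) :=
        intervalIntegral.continuous_parametric_intervalIntegral_of_continuous'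
          (f := fun (y : ℝ) z => Dy x y z)
          (cDy3.comp (by fun_prop : Continuous fun q : ℝ × ℝ => ((x, q.1, q.2) : ℝ × ℝ × ℝ))) 0 a
      have hBzero : (∫ y in (0:ℝ)..a₂, ∫ z in (0:ℝ)..a, Dy x y z) = 0 := by
        rw [aux_swap (fun y z => Dy x y z)
          (cDy3.comp (by fun_prop : Continuous fun q : ℝ × ℝ => ((x, q.1, q.2) : ℝ × ℝ × ℝ)))
          a₂ a ha₂.le ha.le]
        have hyint : ∀ z : ℝ, (∫ y in (0:ℝ)..a₂, Dy x y z) = 0 := by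
          intro z
          have ly : Continuous (fun y : ℝ => ((x, y, z) : ℝ × ℝ × ℝ)) := by fun_prop
          calc (∫ y in (0:ℝ)..a₂, Dy x y z)
              = (starRingEnd ℂ) (u x a₂ z 1) * φ x a₂ z
                - (starRingEnd ℂ) (u x 0 z 1) * φ x 0 z :=
                aux_ftc _ _ (fun y => hgy x y z) (cDy3.comp ly)
            _ = 0 := by
                have h1 : u x a₂ z 1 = u x 0 z 1 := by
                  have := hpy x 0 z; rw [zero_add] at this; rw [this]
                have h2 : φ x a₂ z = φ x 0 z := by
                  have := hφpy x 0 z; rwa [zero_add] at this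
                rw [h1, h2, sub_self]
        calc (∫ z in (0:ℝ)..a, ∫ y in (0:ℝ)..a₂, Dy x y z)
            = ∫ z in (0:ℝ)..a, (0:ℂ) := intervalIntegral.integral_congr fun z _ => hyint z
          _ = 0 := by simp
      rw [intervalIntegral.integral_add (cAy.intervalIntegrable _ _) (cBy.intervalIntegrable _ _),
        hBzero, add_zero]
    -- the Dx part drops out after two swaps
    have c2D : Continuous (fun q : ℝ × ℝ => ∫ z in (0:ℝ)..a, Dx q.1 q.2 z) :=
      intervalIntegral.continuous_parametric_intervalIntegral_of_continuous'
        (f := fun (q : ℝ × ℝ) z => Dx q.1 q.2 z)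
        (cDx3.comp (by fun_prop :
          Continuous fun r : (ℝ × ℝ) × ℝ => ((r.1.1, r.1.2, r.2) : ℝ × ℝ × ℝ))) 0 a
    have hxy : ∀ y : ℝ, (∫ x in (0:ℝ)..a₁, ∫ z in (0:ℝ)..a, Dx x y z) = 0 := by
      intro y
      rw [aux_swap (fun x z => Dx x y z)
        (cDx3.comp (by fun_prop : Continuous fun q : ℝ × ℝ => ((q.1, y, q.2) : ℝ × ℝ × ℝ)))
        a₁ a ha₁.le ha.le]
      have hx0 : ∀ z : ℝ, (∫ x in (0:ℝ)..a₁, Dx x y z) = 0 := by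
        intro z
        have lx : Continuous (fun x : ℝ => ((x, y, z) : ℝ × ℝ × ℝ)) := by fun_prop
        calc (∫ x in (0:ℝ)..a₁, Dx x y z)
            = (starRingEnd ℂ) (u a₁ y z 0) * φ a₁ y z
              - (starRingEnd ℂ) (u 0 y z 0) * φ 0 y z :=
              aux_ftc _ _ (fun x => hfx x y z) (cDx3.comp lx)
          _ = 0 := by
              have h1 : u a₁ y z 0 = u 0 y z 0 := by
                have := hpx 0 y z; rw [zero_add] at this; rw [this]
              have h2 : φ a₁ y z = φ 0 y z := by
                have := hφpx 0 y z; rwa [zero_add] at this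
              rw [h1, h2, sub_self]
      calc (∫ z in (0:ℝ)..a, ∫ x in (0:ℝ)..a₁, Dx x y z)
          = ∫ z in (0:ℝ)..a, (0:ℂ) := intervalIntegral.integral_congr fun z _ => hx0 z
        _ = 0 := by simp
    calc (∫ x in (0:ℝ)..a₁, ∫ y in (0:ℝ)..a₂, ∫ z in (0:ℝ)..a,
          ∑ j : Fin 3, (starRingEnd ℂ) (u x y z j) *
            ((![-(N x y z 1), N x y z 0, 0] : Fin 3 → ℂ) j
              - Complex.I * ((lamk : ℝ) : ℂ) * N x y z j))
        = ∫ x in (0:ℝ)..a₁, ∫ y in (0:ℝ)..a₂,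
            ((∫ z in (0:ℝ)..a, Dx x y z) + ∫ z in (0:ℝ)..a, Dy x y z) :=
          intervalIntegral.integral_congr fun x _ =>
            intervalIntegral.integral_congr fun y _ => hinner x y
      _ = ∫ x in (0:ℝ)..a₁, ∫ y in (0:ℝ)..a₂, ∫ z in (0:ℝ)..a, Dx x y z :=
          intervalIntegral.integral_congr fun x _ => hmid x
      _ = ∫ y in (0:ℝ)..a₂, ∫ x in (0:ℝ)..a₁, ∫ z in (0:ℝ)..a, Dx x y z :=
          aux_swap _ c2D a₁ a₂ ha₁.le ha₂.le
      _ = ∫ y in (0:ℝ)..a₂, (0:ℂ) := intervalIntegral.integral_congr fun y _ => hxy y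
      _ = 0 := by simp
end
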